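/- Let g be a positive random variable with E[1/g] < ∞ and E[|ln g|] < ∞, define ν_m := (E[(1/g)^{1/m}])^m for integers m ≥ 1, and for t ≥ 2 define the Suboptimal II threshold η_t := (ν_{t−1} ν_{t−2} ⋯ ν_1)^{−1/(t−1)}. Then lim_{t → ∞} E[ log₂(g / η_t) ] = 0. -/

import Mathlib

open MeasureTheory Filter

/-- Fractional moment constant `ν_m := (E[(1/g)^{1/m}])^m` of the channel state `g`. -/
noncomputable def nuM {Ω : Type*} [MeasurableSpace Ω] (μ : Measure Ω) (g : Ω → ℝ)
    (m : ℕ) : ℝ :=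
  (∫ ω, (1 / g ω) ^ ((1 : ℝ) / (m : ℝ)) ∂μ) ^ (m : ℝ)

section Aux

variable {Ω : Type*} [MeasurableSpace Ω] (μ : Measure Ω) (g : Ω → ℝ)

/-- The fractional moment `E[(1/g)^{1/m}]`. -/
noncomputable def emM (m : ℕ) : ℝ := ∫ ω, (1 / g ω) ^ ((1 : ℝ) / (m : ℝ)) ∂μ

lemma rpow_le_one_add_of_le_one {x p : ℝ} (hx : 0 < x) (hp0 : 0 ≤ p) (hp1 : p ≤ 1) :
    x ^ p ≤ 1 + x := by
  rcases le_total x 1 with h | h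
  · have : x ^ p ≤ 1 := Real.rpow_le_one hx.le h hp0
    linarith
  · have : x ^ p ≤ x ^ (1 : ℝ) := Real.rpow_le_rpow_of_exponent_le h hp1
    rw [Real.rpow_one] at this
    linarith

lemma rpow_le_one_add_mul {x p : ℝ} (hx : 0 < x) (hp0 : 0 ≤ p) (hp1 : p ≤ 1) :
    x ^ p ≤ 1 + p * (x - 1) := by
  have := rpow_one_add_le_one_add_mul_self (s := x - 1) (by linarith) hp0 hp1
  simpa using this

lemma one_add_mul_log_le_rpow {x p : ℝ} (hx : 0 < x) :
    1 + p * Real.log x ≤ x ^ p := by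
  have h := Real.add_one_le_exp (p * Real.log x)
  rw [Real.rpow_def_of_pos hx]
  rw [mul_comm] at h
  linarith

end Aux

/-- Pointwise: `m (x^{1/m} - 1) → log x` as `m → ∞`, for `x > 0`. -/
lemma tendsto_mul_rpow_sub_one {x : ℝ} (hx : 0 < x) :
    Filter.Tendsto (fun m : ℕ => (m : ℝ) * (x ^ ((1 : ℝ) / (m : ℝ)) - 1)) atTop
      (nhds (Real.log x)) := by
  set c := Real.log x with hc
  have hupper : Filter.Tendsto (fun m : ℕ => c / (1 - c / (m : ℝ))) atTop (nhds c) := by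
    have h1 : Filter.Tendsto (fun m : ℕ => 1 - c / (m : ℝ)) atTop (nhds 1) := by
      have := (tendsto_const_nhds (x := c) (f := atTop (α := ℕ))).div_atTop
        tendsto_natCast_atTop_atTop
      simpa using (tendsto_const_nhds (x := (1:ℝ))).sub this
    have := (tendsto_const_nhds (x := c) (f := atTop (α := ℕ))).div h1 one_ne_zero
    rw [div_one] at this
    exact this
  refine tendsto_of_tendsto_of_tendsto_of_le_of_le' tendsto_const_nhds hupper ?_ ?_
  · filter_upwards [eventually_ge_atTop 1] with m hm
    have hm0 : (0:ℝ) < (m : ℝ) := by exact_mod_cast hm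
    have hle := one_add_mul_log_le_rpow (p := (1:ℝ)/(m:ℝ)) hx
    have : 1 + (1/(m:ℝ)) * c ≤ x ^ ((1:ℝ)/(m:ℝ)) := hle
    have h2 : (1/(m:ℝ)) * c ≤ x ^ ((1:ℝ)/(m:ℝ)) - 1 := by linarith
    calc c = (m:ℝ) * ((1/(m:ℝ)) * c) := by field_simp
    _ ≤ (m:ℝ) * (x ^ ((1:ℝ)/(m:ℝ)) - 1) := by
        exact mul_le_mul_of_nonneg_left h2 hm0.le
  · have hev : ∀ᶠ m : ℕ in atTop, |c| < (m : ℝ) := by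
      have := tendsto_natCast_atTop_atTop (R := ℝ)
      exact this.eventually_gt_atTop _
    filter_upwards [eventually_ge_atTop 1, hev] with m hm hcm
    have hm0 : (0:ℝ) < (m : ℝ) := by exact_mod_cast hm
    have hden : 0 < 1 - c / (m:ℝ) := by
      rw [sub_pos, div_lt_one hm0]
      exact lt_of_le_of_lt (le_abs_self c) hcm
    -- x^{-1/m} ≥ 1 - c/m > 0
    have hlow : 1 - c / (m:ℝ) ≤ x ^ (-((1:ℝ)/(m:ℝ))) := by
      have := one_add_mul_log_le_rpow (p := -((1:ℝ)/(m:ℝ))) hx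
      have h' : 1 + -((1:ℝ)/(m:ℝ)) * c ≤ x ^ (-((1:ℝ)/(m:ℝ))) := this
      have : 1 + -((1:ℝ)/(m:ℝ)) * c = 1 - c / (m:ℝ) := by ring
      linarith [h' , this ▸ h']
    have hinv : x ^ ((1:ℝ)/(m:ℝ)) ≤ (1 - c / (m:ℝ))⁻¹ := by
      have hxp : x ^ ((1:ℝ)/(m:ℝ)) = (x ^ (-((1:ℝ)/(m:ℝ))))⁻¹ := by
        rw [← Real.rpow_neg hx.le, neg_neg]
      rw [hxp]
      exact inv_anti₀ hden hlow
    have key : (m:ℝ) * (x ^ ((1:ℝ)/(m:ℝ)) - 1) ≤ (m:ℝ) * ((1 - c/(m:ℝ))⁻¹ - 1) :=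
      mul_le_mul_of_nonneg_left (by linarith) hm0.le
    have heq : (m:ℝ) * ((1 - c/(m:ℝ))⁻¹ - 1) = c / (1 - c/(m:ℝ)) := by
      rw [div_eq_mul_inv]
      have h2 : ((1 : ℝ) - c/(m:ℝ)) ≠ 0 := ne_of_gt hden
      have h3 : (m:ℝ) - c ≠ 0 := by
        intro h
        apply h2
        rw [sub_eq_zero] at h ⊢
        rw [← h, div_self hm0.ne']
      field_simp
      ring
    linarith [key, heq ▸ key]

/-- With the Suboptimal II channel threshold `η_t := (ν_{t−1} ν_{t−2} ⋯ ν₁)^{−1/(t−1)}`,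
the mean channel advantage `E[log₂(g/η_t)]` tends to `0` as `t → ∞`. -/
theorem suboptII_mean_advantage_tendsto_zero {Ω : Type*} [MeasurableSpace Ω] (μ : Measure Ω)
    [IsProbabilityMeasure μ]
    (g : Ω → ℝ) (hgpos : ∀ ω, 0 < g ω) (hgmeas : Measurable g)
    (hint : Integrable (fun ω => 1 / g ω) μ)
    (hlogint : Integrable (fun ω => Real.log (g ω)) μ) :
    Tendsto (fun t : ℕ =>
        ∫ ω, Real.logb 2 (g ω /
          ((∏ i ∈ Finset.Icc 1 (t - 1), nuM μ g i) ^ (-(1 : ℝ) / ((t : ℝ) - 1)))) ∂μ)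
      atTop (nhds 0) := by
  classical
  set X : Ω → ℝ := fun ω => 1 / g ω with hX
  have hXpos : ∀ ω, 0 < X ω := fun ω => by
    simpa [hX] using one_div_pos.mpr (hgpos ω)
  have hXmeas : Measurable X := measurable_const.div hgmeas
  set L : ℝ := ∫ ω, Real.log (g ω) ∂μ with hL
  have hlogX : ∀ ω, Real.log (X ω) = - Real.log (g ω) := fun ω => by
    simp [hX, one_div, Real.log_inv]
  set E : ℕ → ℝ := fun m => ∫ ω, X ω ^ ((1 : ℝ) / (m : ℝ)) ∂μ with hE
  have hmeasm : ∀ m : ℕ, AEStronglyMeasurable (fun ω => X ω ^ ((1:ℝ)/(m:ℝ))) μ := by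
    intro m
    exact ((Real.continuous_rpow_const (by positivity)).measurable.comp
      hXmeas).aestronglyMeasurable
  have hbound1 : ∀ (m : ℕ), 1 ≤ m → ∀ ω, ‖X ω ^ ((1:ℝ)/(m:ℝ))‖ ≤ 1 + X ω := by
    intro m hm ω
    have hm0 : (0:ℝ) < (m:ℝ) := by exact_mod_cast hm
    have h0 : (0:ℝ) < X ω ^ ((1:ℝ)/(m:ℝ)) := Real.rpow_pos_of_pos (hXpos ω) _
    rw [Real.norm_eq_abs, abs_of_pos h0]
    exact rpow_le_one_add_of_le_one (hXpos ω) (by positivity)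
      (by rw [div_le_one hm0]; exact_mod_cast hm)
  have hboundint : Integrable (fun ω => 1 + X ω) μ := (integrable_const 1).add hint
  have hintm : ∀ (m : ℕ), 1 ≤ m → Integrable (fun ω => X ω ^ ((1:ℝ)/(m:ℝ))) μ := by
    intro m hm
    exact (hboundint.mono' (hmeasm m) (Filter.Eventually.of_forall (hbound1 m hm)))
  have hEpos : ∀ (m : ℕ), 1 ≤ m → 0 < E m := by
    intro m hm
    rw [hE]
    rw [integral_pos_iff_support_of_nonneg
      (fun ω => (Real.rpow_pos_of_pos (hXpos ω) _).le) (hintm m hm)]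
    have hsupp : Function.support (fun ω => X ω ^ ((1:ℝ)/(m:ℝ))) = Set.univ := by
      apply Set.eq_univ_of_forall
      intro ω
      exact (Real.rpow_pos_of_pos (hXpos ω) _).ne'
    rw [hsupp]
    simp
  have hnueq : ∀ m : ℕ, nuM μ g m = E m ^ (m : ℝ) := fun m => rfl
  have hnupos : ∀ (m : ℕ), 1 ≤ m → 0 < nuM μ g m := by
    intro m hm
    rw [hnueq]
    exact Real.rpow_pos_of_pos (hEpos m hm) _
  -- m (E m - 1) → ∫ log X = -L
  have hmE : Tendsto (fun m : ℕ => (m:ℝ) * (E m - 1)) atTop (nhds (-L)) := by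
    have hLX : -L = ∫ ω, Real.log (X ω) ∂μ := by
      rw [hL, ← integral_neg]
      exact integral_congr_ae (Filter.Eventually.of_forall fun ω => (hlogX ω).symm)
    rw [hLX]
    have key : Tendsto (fun m : ℕ => ∫ ω, (m:ℝ) * (X ω ^ ((1:ℝ)/(m:ℝ)) - 1) ∂μ) atTop
        (nhds (∫ ω, Real.log (X ω) ∂μ)) := by
      refine tendsto_integral_filter_of_dominated_convergence
        (fun ω => |X ω - 1| + |Real.log (X ω)|) ?_ ?_ ?_ ?_
      · filter_upwards with m
        exact (((hmeasm m).sub aestronglyMeasurable_const).const_mul _)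
      · filter_upwards [eventually_ge_atTop 1] with m hm
        filter_upwards with ω
        have hm0 : (0:ℝ) < (m:ℝ) := by exact_mod_cast hm
        have hp1 : (1:ℝ)/(m:ℝ) ≤ 1 := by rw [div_le_one hm0]; exact_mod_cast hm
        have hup : X ω ^ ((1:ℝ)/(m:ℝ)) ≤ 1 + ((1:ℝ)/(m:ℝ)) * (X ω - 1) :=
          rpow_le_one_add_mul (hXpos ω) (by positivity) hp1
        have hlo : 1 + ((1:ℝ)/(m:ℝ)) * Real.log (X ω) ≤ X ω ^ ((1:ℝ)/(m:ℝ)) :=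
          one_add_mul_log_le_rpow (hXpos ω)
        have hF1 : (m:ℝ) * (X ω ^ ((1:ℝ)/(m:ℝ)) - 1) ≤ X ω - 1 := by
          have h := mul_le_mul_of_nonneg_left (by linarith : X ω ^ ((1:ℝ)/(m:ℝ)) - 1
            ≤ ((1:ℝ)/(m:ℝ)) * (X ω - 1)) hm0.le
          calc (m:ℝ) * (X ω ^ ((1:ℝ)/(m:ℝ)) - 1) ≤ (m:ℝ) * (((1:ℝ)/(m:ℝ)) * (X ω - 1)) := h
          _ = X ω - 1 := by field_simp
        have hF2 : Real.log (X ω) ≤ (m:ℝ) * (X ω ^ ((1:ℝ)/(m:ℝ)) - 1) := by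
          have h := mul_le_mul_of_nonneg_left (by linarith : ((1:ℝ)/(m:ℝ)) * Real.log (X ω)
            ≤ X ω ^ ((1:ℝ)/(m:ℝ)) - 1) hm0.le
          calc Real.log (X ω) = (m:ℝ) * (((1:ℝ)/(m:ℝ)) * Real.log (X ω)) := by field_simp
          _ ≤ (m:ℝ) * (X ω ^ ((1:ℝ)/(m:ℝ)) - 1) := h
        rw [Real.norm_eq_abs, abs_le]
        constructor
        · have h1 := neg_abs_le (Real.log (X ω))
          have h2 := abs_nonneg (X ω - 1)
          linarith
        · have h1 := le_abs_self (X ω - 1)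
          have h2 := abs_nonneg (Real.log (X ω))
          linarith
      · exact (hint.sub (integrable_const 1)).abs.add
          ((hlogint.neg.congr (Filter.Eventually.of_forall fun ω => (hlogX ω).symm)).abs)
      · filter_upwards with ω
        exact tendsto_mul_rpow_sub_one (hXpos ω)
    refine key.congr' ?_
    filter_upwards [eventually_ge_atTop 1] with m hm
    rw [integral_const_mul, integral_sub (hintm m hm) (integrable_const 1), integral_const]
    simp [hE]
  -- E m → 1
  have hE1 : Tendsto E atTop (nhds 1) := by
    have h2 : Tendsto (fun m : ℕ => ((m:ℝ))⁻¹ * ((m:ℝ) * (E m - 1)) + 1) atTop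
        (nhds ((0:ℝ) * (-L) + 1)) :=
      ((tendsto_inv_atTop_nhds_zero_nat.mul hmE).add tendsto_const_nhds)
    rw [zero_mul, zero_add] at h2
    refine h2.congr' ?_
    filter_upwards [eventually_ge_atTop 1] with m hm
    have hm0 : ((m:ℝ)) ≠ 0 := by
      have : (0:ℕ) < m := hm
      positivity
    field_simp
    ring
  -- m log (E m) → -L
  have hlogE : Tendsto (fun m : ℕ => (m:ℝ) * Real.log (E m)) atTop (nhds (-L)) := by
    have hdiff : Tendsto (fun m : ℕ => (m:ℝ) * Real.log (E m) - (m:ℝ) * (E m - 1)) atTop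
        (nhds 0) := by
      have habs : Tendsto (fun m : ℕ =>
          |(m:ℝ) * Real.log (E m) - (m:ℝ) * (E m - 1)|) atTop (nhds 0) := by
        have hg0 : Tendsto (fun m : ℕ => 2 * |(m:ℝ) * (E m - 1)| * |E m - 1|) atTop
            (nhds (2 * |(-L)| * |(0:ℝ)|)) := by
          refine Tendsto.mul ?_ ?_
          · exact (tendsto_const_nhds.mul hmE.abs)
          · have h3 : Tendsto (fun m : ℕ => E m - 1) atTop (nhds 0) := by
              simpa using hE1.sub (tendsto_const_nhds (x := (1:ℝ)))
            exact h3.abs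
        rw [abs_zero, mul_zero] at hg0
        refine squeeze_zero' ?_ ?_ hg0
        · filter_upwards with m; exact abs_nonneg _
        have hev : ∀ᶠ m : ℕ in atTop, |E m - 1| ≤ 1/2 := by
          have h3 : Tendsto (fun m : ℕ => E m - 1) atTop (nhds 0) := by
            simpa using hE1.sub (tendsto_const_nhds (x := (1:ℝ)))
          have h4 := h3.abs
          rw [abs_zero] at h4
          exact h4.eventually_le_const (by norm_num)
        filter_upwards [hev, eventually_ge_atTop 1] with m hm hm1
        set u := E m - 1 with hu
        have hu1 : |(-u)| < 1 := by rw [abs_neg]; linarith [hm]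
        have hkey := Real.abs_log_sub_add_sum_range_le hu1 1
        simp only [Finset.sum_range_one] at hkey
        have h1u : (1:ℝ) - (-u) = E m := by rw [hu]; ring
        rw [h1u] at hkey
        have h2 : |(-u)| ^ (1+1) / (1 - |(-u)|) ≤ 2 * u^2 := by
          rw [abs_neg]
          rw [div_le_iff₀ (by linarith [hm] : (0:ℝ) < 1 - |u|)]
          have hu2 : |u| ^ (1+1) = u ^ 2 := by rw [show (1+1) = 2 from rfl, sq_abs]
          rw [hu2]
          nlinarith [sq_nonneg u, abs_nonneg u,
            mul_nonneg (sq_nonneg u) (by linarith [hm] : (0:ℝ) ≤ 1/2 - |u|)]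
        have hkey2 : |Real.log (E m) - u| ≤ 2 * u ^ 2 := by
          have h3 : (-u)^(0+1)/((0:ℕ)+1 : ℝ) + Real.log (E m) = Real.log (E m) - u := by
            push_cast
            ring
          calc |Real.log (E m) - u| = |(-u)^(0+1)/((0:ℕ)+1 : ℝ) + Real.log (E m)| := by
                rw [h3]
          _ ≤ |(-u)| ^ (1+1) / (1 - |(-u)|) := by exact_mod_cast hkey
          _ ≤ 2 * u^2 := h2
        have hm0 : (0:ℝ) ≤ (m:ℝ) := by positivity
        calc |(m:ℝ) * Real.log (E m) - (m:ℝ) * u|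
            = (m:ℝ) * |Real.log (E m) - u| := by
              rw [← mul_sub, abs_mul, abs_of_nonneg hm0]
          _ ≤ (m:ℝ) * (2 * u^2) := mul_le_mul_of_nonneg_left hkey2 hm0
          _ = 2 * |(m:ℝ) * u| * |u| := by
              rw [abs_mul, abs_of_nonneg hm0]
              have h9 : |u| * |u| = u ^ 2 := by rw [← abs_mul, abs_mul_self, sq]
              linear_combination (-2 * (m:ℝ)) * h9
      have hneg := habs.neg
      rw [neg_zero] at hneg
      exact tendsto_of_tendsto_of_tendsto_of_le_of_le hneg habs
        (fun m => neg_abs_le _) (fun m => le_abs_self _)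
    have h5 := hdiff.add hmE
    rw [zero_add] at h5
    refine h5.congr (fun m => by ring)
  -- Cesàro limit
  have hces : Tendsto (fun n : ℕ => ((n:ℝ))⁻¹ * ∑ i ∈ Finset.Icc 1 n,
      Real.log (nuM μ g i)) atTop (nhds (-L)) := by
    set b : ℕ → ℝ := fun n => ((n+1:ℕ):ℝ) * Real.log (E (n+1)) with hb
    have hbt : Tendsto b atTop (nhds (-L)) := by
      have h6 := hlogE.comp (tendsto_add_atTop_nat 1)
      refine h6.congr (fun n => ?_)
      simp [hb, Function.comp]
    have hc := hbt.cesaro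
    refine hc.congr (fun n => ?_)
    congr 1
    rw [← Finset.Ico_add_one_right_eq_Icc, Finset.sum_Ico_eq_sum_range]
    refine Finset.sum_congr (by simp) (fun i _ => ?_)
    rw [hb]
    have h1 : nuM μ g (1 + i) = E (1+i) ^ ((1+i : ℕ) : ℝ) := hnueq _
    rw [h1, Real.log_rpow (hEpos (1+i) (by omega))]
    norm_num [add_comm]
  -- Final assembly
  have hfin : Tendsto (fun t : ℕ => (L + ((t-1:ℕ):ℝ)⁻¹ * ∑ i ∈ Finset.Icc 1 (t-1),
      Real.log (nuM μ g i)) / Real.log 2) atTop (nhds 0) := by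
    have h1 := hces.comp (tendsto_sub_atTop_nat 1)
    have h2 : Tendsto (fun t : ℕ => (L + ((t-1:ℕ):ℝ)⁻¹ * ∑ i ∈ Finset.Icc 1 (t-1),
        Real.log (nuM μ g i)) / Real.log 2) atTop (nhds ((L + -L) / Real.log 2)) :=
      ((tendsto_const_nhds.add h1).div_const _)
    simpa using h2
  refine hfin.congr' ?_
  filter_upwards [eventually_ge_atTop 2] with t ht
  set n := t - 1 with hn
  have hn1 : 1 ≤ n := by omega
  have hcast : ((t:ℝ) - 1) = (n:ℝ) := by
    have h7 : t = n + 1 := by omega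
    rw [h7]
    push_cast
    ring
  set P : ℝ := ∏ i ∈ Finset.Icc 1 n, nuM μ g i with hP
  have hPpos : 0 < P :=
    Finset.prod_pos (fun i hi => hnupos i (Finset.mem_Icc.mp hi).1)
  set e : ℝ := -(1:ℝ) / ((t:ℝ) - 1) with he
  have hηpos : 0 < P ^ e := Real.rpow_pos_of_pos hPpos _
  have hlogP : Real.log P = ∑ i ∈ Finset.Icc 1 n, Real.log (nuM μ g i) := by
    rw [hP, Real.log_prod]
    intro i hi
    exact (hnupos i (Finset.mem_Icc.mp hi).1).ne'
  have hlogη : Real.log (P ^ e) = e * Real.log P := Real.log_rpow hPpos _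
  have hptw : ∀ ω, Real.logb 2 (g ω / P ^ e)
      = Real.log (g ω) / Real.log 2 - (e * Real.log P) / Real.log 2 := by
    intro ω
    rw [Real.logb, Real.log_div (hgpos ω).ne' hηpos.ne', hlogη, sub_div]
  calc (L + ((n:ℕ):ℝ)⁻¹ * ∑ i ∈ Finset.Icc 1 n, Real.log (nuM μ g i)) / Real.log 2
      = ∫ ω, (Real.log (g ω) / Real.log 2 - (e * Real.log P) / Real.log 2) ∂μ := by
        rw [integral_sub (hlogint.div_const _) (integrable_const _), integral_const]
        simp only [measure_univ, probReal_univ, ENNReal.toReal_one, one_smul]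
        rw [integral_div, ← hlogP, he, hcast]
        have hn0 : ((n:ℝ)) ≠ 0 := by
          have h8 : (0:ℕ) < n := hn1
          positivity
        field_simp
        ring
    _ = ∫ ω, Real.logb 2 (g ω / P ^ e) ∂μ :=
        integral_congr_ae (Filter.Eventually.of_forall fun ω => (hptw ω).symm)
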